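/- Define p(y) := (2π)^{−1/2} e^{−y²/2}, and define p^{[1]} := p and p^{[n+1]}(y) := ∫_y^∞ p^{[n]}(x) dx for n ≥ 1. Let M ≥ 1 and N ≥ 1 be integers and let d_1, …, d_N be positive real numbers. Then ∫_{(0,∞)^N} p^{[M]}( d_1 y_1 + … + d_N y_N ) dy_1 … dy_N = ( ∏_{i=1}^N 1/d_i ) · p^{[M+N]}(0). -/

import Mathlib

open MeasureTheory Real Set

/-- The standard Gaussian density `p(y) = (2π)^{-1/2} e^{-y²/2}`. -/
noncomputable def gaussDensity (y : ℝ) : ℝ := (2 * π) ^ (-(1 / 2 : ℝ)) * Real.exp (-y ^ 2 / 2)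

/-- The iterated tail integrals of the Gaussian density: `pIter 1 = p` and
`pIter (n+1) y = ∫_y^∞ pIter n x dx` for `n ≥ 1` (the value at `0` is irrelevant). -/
noncomputable def pIter : ℕ → ℝ → ℝ
  | 0, y => gaussDensity y
  | 1, y => gaussDensity y
  | (n + 2), y => ∫ x in Set.Ioi y, pIter (n + 1) x
noncomputable def pC : ℝ := (2 * π) ^ (-(1 / 2 : ℝ)) * Real.exp (1 / 2)

lemma gauss_nonneg (y : ℝ) : 0 ≤ gaussDensity y :=
  mul_nonneg (Real.rpow_nonneg (by positivity) _) (Real.exp_nonneg _)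

lemma gauss_le (y : ℝ) : gaussDensity y ≤ pC * Real.exp (-y) := by
  unfold gaussDensity pC
  rw [mul_assoc, ← Real.exp_add]
  refine mul_le_mul_of_nonneg_left ?_ (Real.rpow_nonneg (by positivity) _)
  refine Real.exp_le_exp.2 ?_
  nlinarith [sq_nonneg (y - 1)]

lemma expIntOn (a : ℝ) : IntegrableOn (fun x : ℝ => Real.exp (-x)) (Ioi a) := by
  simpa [neg_one_mul] using exp_neg_integrableOn_Ioi a (show (0:ℝ) < 1 by norm_num)

lemma pIter_succ_succ (m : ℕ) (y : ℝ) : pIter (m + 2) y = ∫ x in Set.Ioi y, pIter (m + 1) x := rfl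

lemma pIter_prop (n : ℕ) : Measurable (pIter n) ∧ (∀ y, 0 ≤ pIter n y) ∧
    (∀ y, pIter n y ≤ pC * Real.exp (-y)) := by
  induction n with
  | zero =>
    refine ⟨?_, gauss_nonneg, gauss_le⟩
    show Measurable gaussDensity
    unfold gaussDensity; fun_prop
  | succ n ih =>
    match n, ih with
    | 0, _ =>
      refine ⟨?_, gauss_nonneg, gauss_le⟩
      show Measurable gaussDensity
      unfold gaussDensity; fun_prop
    | (m + 1), ih =>
      obtain ⟨hmeas, hpos, hle⟩ := ih
      have hint : ∀ a : ℝ, IntegrableOn (pIter (m + 1)) (Ioi a) := fun a => by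
        refine Integrable.mono' ((expIntOn a).const_mul pC) hmeas.aestronglyMeasurable ?_
        exact Filter.Eventually.of_forall fun x => by
          rw [Real.norm_eq_abs, abs_of_nonneg (hpos x)]; exact hle x
      have hanti : Antitone (pIter (m + 2)) := by
        intro a b hab
        rw [pIter_succ_succ, pIter_succ_succ]
        exact setIntegral_mono_set (hint a)
          (Filter.Eventually.of_forall fun x => hpos x) (Ioi_subset_Ioi hab).eventuallyLE
      refine ⟨hanti.measurable, fun y => ?_, fun y => ?_⟩
      · exact setIntegral_nonneg measurableSet_Ioi fun x _ => hpos x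
      · rw [pIter_succ_succ]
        calc (∫ x in Ioi y, pIter (m + 1) x) ≤ ∫ x in Ioi y, pC * Real.exp (-x) :=
              setIntegral_mono (hint y) ((expIntOn y).const_mul pC) hle
          _ = pC * Real.exp (-y) := by rw [integral_const_mul, integral_exp_neg_Ioi]

lemma pIter_integrableOn (n : ℕ) (a : ℝ) : IntegrableOn (pIter n) (Ioi a) := by
  obtain ⟨hmeas, hpos, hle⟩ := pIter_prop n
  refine Integrable.mono' ((expIntOn a).const_mul pC) hmeas.aestronglyMeasurable ?_
  exact Filter.Eventually.of_forall fun x => by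
    rw [Real.norm_eq_abs, abs_of_nonneg (hpos x)]; exact hle x

lemma pIter_step {M : ℕ} (hM : 1 ≤ M) (c : ℝ) {d : ℝ} (hd : 0 < d) :
    (∫ y in Ioi (0:ℝ), pIter M (c + d * y)) = (1 / d) * pIter (M + 1) c := by
  obtain ⟨m, rfl⟩ : ∃ m, M = m + 1 := ⟨M - 1, (Nat.succ_pred_eq_of_pos hM).symm⟩
  have h1 : (∫ y in Ioi (0:ℝ), pIter (m + 1) (c + d * y))
      = d⁻¹ • ∫ x in Ioi (d * 0), pIter (m + 1) (c + x) :=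
    integral_comp_mul_left_Ioi (fun x => pIter (m + 1) (c + x)) 0 hd
  rw [h1, mul_zero, pIter_succ_succ, smul_eq_mul, one_div]
  congr 1
  have h2 := (measurePreserving_add_right volume c).setIntegral_preimage_emb
    (measurableEmbedding_addRight c) (pIter (m + 1)) (Ioi c)
  simp only [preimage_add_const_Ioi, sub_self] at h2
  rw [← h2]
  exact setIntegral_congr_fun measurableSet_Ioi fun x _ => by rw [add_comm c x]

lemma orthant_measurable (N : ℕ) : MeasurableSet {y : Fin N → ℝ | ∀ i, 0 < y i} := by
  have : {y : Fin N → ℝ | ∀ i, 0 < y i} = Set.pi Set.univ (fun _ => Ioi 0) := by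
    ext y; simp [Set.mem_pi]
  rw [this]; exact MeasurableSet.univ_pi (fun _ => measurableSet_Ioi)

lemma integrableOn_orthant (M N : ℕ) (c : ℝ) (d : Fin N → ℝ) (hd : ∀ i, 0 < d i) :
    IntegrableOn (fun y : Fin N → ℝ => pIter M (c + ∑ i, d i * y i)) {y | ∀ i, 0 < y i} := by
  obtain ⟨hmeas, hpos, hle⟩ := pIter_prop M
  set g : (Fin N → ℝ) → ℝ := fun y =>
    (pC * Real.exp (-c)) * ∏ i, Set.indicator (Ioi 0) (fun t => Real.exp (-(d i * t))) (y i)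
    with hgdef
  have hgint : Integrable g := by
    refine Integrable.const_mul ?_ _
    refine Integrable.fintype_prod (f := fun i => Set.indicator (Ioi 0)
      (fun t => Real.exp (-(d i * t)))) fun i => ?_
    rw [integrable_indicator_iff measurableSet_Ioi]
    simpa [neg_mul] using exp_neg_integrableOn_Ioi 0 (hd i)
  have hsmeas : Measurable fun y : Fin N → ℝ => c + ∑ i, d i * y i := by
    exact measurable_const.add (Finset.measurable_sum _ fun i _ =>
      (by fun_prop))
  refine Integrable.mono' hgint.integrableOn (hmeas.comp hsmeas).aestronglyMeasurable ?_
  rw [ae_restrict_iff' (orthant_measurable N)]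
  refine Filter.Eventually.of_forall fun y hy => ?_
  have hy' : ∀ i, 0 < y i := hy
  rw [Real.norm_eq_abs, abs_of_nonneg (hpos _)]
  calc pIter M (c + ∑ i, d i * y i) ≤ pC * Real.exp (-(c + ∑ i, d i * y i)) := hle _
    _ = g y := by
        rw [hgdef]
        have : ∀ i : Fin N, Set.indicator (Ioi 0) (fun t => Real.exp (-(d i * t))) (y i)
            = Real.exp (-(d i * y i)) := fun i => Set.indicator_of_mem (hy' i) _
        simp only [this]
        rw [← Real.exp_sum, mul_assoc, ← Real.exp_add]
        congr 2
        rw [Finset.sum_neg_distrib]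
        ring

lemma main_aux (M : ℕ) (hM : 1 ≤ M) :
    ∀ (N : ℕ) (d : Fin N → ℝ), (∀ i, 0 < d i) → ∀ c : ℝ,
    (∫ y in {y : Fin N → ℝ | ∀ i, 0 < y i}, pIter M (c + ∑ i, d i * y i))
      = (∏ i, 1 / d i) * pIter (M + N) c := by
  intro N
  induction N with
  | zero =>
    intro d hd c
    have hset : {y : Fin 0 → ℝ | ∀ i, 0 < y i} = Set.univ :=
      Set.eq_univ_of_forall fun y i => i.elim0
    rw [hset]
    simp [MeasureTheory.volume_pi, MeasureTheory.Measure.pi_empty_univ, measureReal_def]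
  | succ N ih =>
    intro d hd c
    set e := MeasurableEquiv.piFinSuccAbove (fun _ : Fin (N + 1) => ℝ) 0 with he
    have hvp : MeasurePreserving e := volume_preserving_piFinSuccAbove (fun _ => ℝ) 0
    set S : Set (Fin N → ℝ) := {y | ∀ i, 0 < y i} with hS
    set g : ℝ × (Fin N → ℝ) → ℝ :=
      fun z => pIter M (c + d 0 * z.1 + ∑ i, d i.succ * z.2 i) with hg
    have heapp : ∀ y : Fin (N + 1) → ℝ, e y = (y 0, fun i => y i.succ) := by
      intro y
      rw [he]
      ext
      · simp [MeasurableEquiv.piFinSuccAbove_apply]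
      · simp [MeasurableEquiv.piFinSuccAbove_apply, Fin.removeNth, Fin.succAbove_zero, Fin.tail]
    have hpre : e ⁻¹' (Ioi 0 ×ˢ S) = {y : Fin (N + 1) → ℝ | ∀ i, 0 < y i} := by
      ext y
      simp only [Set.mem_preimage, heapp, Set.mem_prod, Set.mem_Ioi, hS, Set.mem_setOf_eq]
      exact (Fin.forall_fin_succ (P := fun i => 0 < y i)).symm
    have hfun : ∀ y : Fin (N + 1) → ℝ,
        pIter M (c + ∑ i, d i * y i) = g (e y) := by
      intro y
      rw [hg, heapp, Fin.sum_univ_succ, ← add_assoc]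
    have hint : IntegrableOn g (Ioi 0 ×ˢ S) (volume.prod volume) := by
      have h1 := (hvp.restrict_preimage_emb e.measurableEmbedding
        (Ioi 0 ×ˢ S)).integrable_comp_emb e.measurableEmbedding (g := g)
      rw [IntegrableOn, ← Measure.volume_eq_prod, ← h1]
      have h2 := integrableOn_orthant M (N + 1) c d hd
      rw [← hpre] at h2
      have : (g ∘ e) = fun y : Fin (N + 1) → ℝ => pIter M (c + ∑ i, d i * y i) :=
        funext fun y => (hfun y).symm
      show Integrable (g ∘ ⇑e) (volume.restrict (⇑e ⁻¹' (Ioi 0 ×ˢ S)))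
      rw [this]
      exact h2
    calc (∫ y in {y : Fin (N + 1) → ℝ | ∀ i, 0 < y i}, pIter M (c + ∑ i, d i * y i))
        = ∫ y in e ⁻¹' (Ioi 0 ×ˢ S), g (e y) := by
          rw [hpre]; exact setIntegral_congr_fun (orthant_measurable (N + 1)) fun y _ => hfun y
      _ = ∫ z in Ioi 0 ×ˢ S, g z ∂(volume.prod volume) := by
          rw [← Measure.volume_eq_prod, ← hvp.setIntegral_preimage_emb e.measurableEmbedding g (Ioi 0 ×ˢ S)]
      _ = ∫ x in Ioi (0:ℝ), ∫ y2 in S, g (x, y2) := setIntegral_prod g hint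
      _ = ∫ x in Ioi (0:ℝ), (∏ i : Fin N, 1 / d (Fin.succ i)) * pIter (M + N) ((c + d 0 * x)) := by
          refine setIntegral_congr_fun measurableSet_Ioi fun x _ => ?_
          exact ih (fun i => d i.succ) (fun i => hd i.succ) (c + d 0 * x)
      _ = (∏ i : Fin N, 1 / d (Fin.succ i)) * ∫ x in Ioi (0:ℝ), pIter (M + N) (c + d 0 * x) :=
          integral_const_mul _ _
      _ = (∏ i : Fin (N + 1), 1 / d i) * pIter (M + (N + 1)) c := by
          rw [pIter_step (le_trans hM (Nat.le_add_right M N)) c (hd 0),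
            Fin.prod_univ_succ, show M + (N + 1) = M + N + 1 from rfl]
          ring

/-- For `M, N ≥ 1` and positive reals `d₁, …, d_N`,
`∫_{(0,∞)^N} p^{[M]}(d₁y₁ + ⋯ + d_N y_N) dy = (∏ᵢ 1/dᵢ) · p^{[M+N]}(0)`. -/
theorem stmt_14 (M N : ℕ) (hM : 1 ≤ M) (hN : 1 ≤ N)
    (d : Fin N → ℝ) (hd : ∀ i, 0 < d i) :
    (∫ y in {y : Fin N → ℝ | ∀ i, 0 < y i}, pIter M (∑ i, d i * y i))
      = (∏ i, 1 / d i) * pIter (M + N) 0 := by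
  have h := main_aux M hM N d hd 0
  simpa using h
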